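/- Let (M,g) be a 2-step Carnot group with the notation above, and consider the phase function φ(t,x,u,ξ,μ) := (x - xᵗ)·ξᵗ + (u - uᵗ)·μ + (i/4)⟨|J_μ|(x - xᵗ), x - xᵗ⟩, where (xᵗ,uᵗ,ξᵗ,μ) is the Hamiltonian flow of H = |ξ + J_μ x/2| starting at (0,0,ξ,μ). Then the mixed Hessian Φ := ∂_{(ξ,μ)} ∇_{(x,u)} φ is block upper-triangular of the form [[Φ₀, *],[0, I]] with Φ₀ = ∂_ξ ξᵗ - (i/2)|J_μ| ∂_ξ xᵗ independent of (x,u), and hence det Φ = det Φ₀. -/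

import Mathlib

open Matrix Function

/-- The (1-homogeneous) Hamiltonian `ℋ(x, u, ξ, μ) = |ξ + J_μ x / 2|`, the square root of
the principal symbol of the sub-Laplacian on a 2-step Carnot group; it is independent of
`u`, but `u` is kept as a formal argument. -/
noncomputable def sqrtHam {d₁ d₂ : ℕ} (J : (Fin d₂ → ℝ) →ₗ[ℝ] Matrix (Fin d₁) (Fin d₁) ℝ)
    (x : Fin d₁ → ℝ) (_u : Fin d₂ → ℝ) (ξ : Fin d₁ → ℝ) (μ : Fin d₂ → ℝ) : ℝ :=
  Real.sqrt ((ξ + (1 / 2 : ℝ) • (J μ).mulVec x) ⬝ᵥ (ξ + (1 / 2 : ℝ) • (J μ).mulVec x))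

/-- The complex phase function
`φ(t,x,u,ξ,μ) = (x - xᵗ)·ξᵗ + (u - uᵗ)·μ + (i/4)⟨|J_μ|(x - xᵗ), x - xᵗ⟩`,
where `K μ = |J_μ|` and `(xT, uT, ξT)` are the components of the Hamiltonian flow
starting at the origin with covector `(ξ, μ)`. -/
noncomputable def phaseFn {d₁ d₂ : ℕ} (K : (Fin d₂ → ℝ) → Matrix (Fin d₁) (Fin d₁) ℝ)
    (xT : ℝ → (Fin d₁ → ℝ) → (Fin d₂ → ℝ) → Fin d₁ → ℝ)
    (uT : ℝ → (Fin d₁ → ℝ) → (Fin d₂ → ℝ) → Fin d₂ → ℝ)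
    (ξT : ℝ → (Fin d₁ → ℝ) → (Fin d₂ → ℝ) → Fin d₁ → ℝ)
    (t : ℝ) (x : Fin d₁ → ℝ) (u : Fin d₂ → ℝ) (ξ : Fin d₁ → ℝ) (μ : Fin d₂ → ℝ) : ℂ :=
  (((x - xT t ξ μ) ⬝ᵥ ξT t ξ μ : ℝ) : ℂ) + (((u - uT t ξ μ) ⬝ᵥ μ : ℝ) : ℂ)
    + (Complex.I / 4) * (((K μ).mulVec (x - xT t ξ μ) ⬝ᵥ (x - xT t ξ μ) : ℝ) : ℂ)

lemma dot_update_hasDerivAt {n : ℕ} (x w Ξ : Fin n → ℝ) (l : Fin n) :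
    HasDerivAt (fun s => (update x l s - w) ⬝ᵥ Ξ) (Ξ l) (x l) := by
  have key : ∀ i ∈ Finset.univ, HasDerivAt
      (fun s => (update x l s i - w i) * Ξ i)
      (if i = l then Ξ l else 0) (x l) := by
    intro i _
    rcases eq_or_ne i l with rfl | hi
    · simpa [update_self] using ((hasDerivAt_id (x i)).sub_const (w i)).mul_const (Ξ i)
    · simp only [update_of_ne hi, if_neg hi]
      exact hasDerivAt_const _ _
  have hsum := HasDerivAt.fun_sum key
  have hval : (∑ i, if i = l then Ξ l else (0 : ℝ)) = Ξ l := by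
    rw [Finset.sum_ite_eq' Finset.univ l]; simp
  rw [hval] at hsum
  exact hsum

lemma quad_update_hasDerivAt {n : ℕ} (K : Matrix (Fin n) (Fin n) ℝ)
    (hsym : ∀ i j, K i j = K j i) (x w : Fin n → ℝ) (a : Fin n) :
    HasDerivAt (fun s => K.mulVec (update x a s - w) ⬝ᵥ (update x a s - w))
      (2 * K.mulVec (x - w) a) (x a) := by
  have key : ∀ i ∈ Finset.univ, HasDerivAt
      (fun s => (∑ j, K i j * (update x a s j - w j)) * (update x a s i - w i))
      (K i a * (x i - w i) + (∑ j, K i j * (x j - w j)) * (if i = a then 1 else 0))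
      (x a) := by
    intro i _
    have h1 : HasDerivAt (fun s => ∑ j, K i j * (update x a s j - w j)) (K i a) (x a) := by
      have key2 : ∀ j ∈ Finset.univ, HasDerivAt
          (fun s => K i j * (update x a s j - w j))
          (if j = a then K i a else 0) (x a) := by
        intro j _
        rcases eq_or_ne j a with rfl | hj
        · simpa [update_self] using
            ((hasDerivAt_id (x j)).sub_const (w j)).const_mul (K i j)
        · simp only [update_of_ne hj, if_neg hj]
          exact hasDerivAt_const _ _
      have hsum := HasDerivAt.fun_sum key2
      have hval : (∑ j, if j = a then K i a else (0 : ℝ)) = K i a := by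
        rw [Finset.sum_ite_eq' Finset.univ a]; simp
      rw [hval] at hsum
      exact hsum
    have h2 : HasDerivAt (fun s => update x a s i - w i)
        (if i = a then 1 else 0) (x a) := by
      rcases eq_or_ne i a with rfl | hi
      · simpa [update_self] using (hasDerivAt_id (x i)).sub_const (w i)
      · simp only [update_of_ne hi, if_neg hi]
        exact hasDerivAt_const _ _
    have := h1.fun_mul h2
    simpa [Function.update_eq_self] using this
  have hsum := HasDerivAt.fun_sum key
  have hval : (∑ i, (K i a * (x i - w i)
        + (∑ j, K i j * (x j - w j)) * (if i = a then (1 : ℝ) else 0)))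
      = 2 * K.mulVec (x - w) a := by
    rw [Finset.sum_add_distrib]
    have e1 : ∑ i, K i a * (x i - w i) = K.mulVec (x - w) a := by
      simp only [Matrix.mulVec, dotProduct, Pi.sub_apply]
      exact Finset.sum_congr rfl fun i _ => by rw [hsym i a]
    have e2 : ∑ i, (∑ j, K i j * (x j - w j)) * (if i = a then (1 : ℝ) else 0)
        = K.mulVec (x - w) a := by
      simp only [mul_ite, mul_one, mul_zero]
      rw [Finset.sum_ite_eq' Finset.univ a]
      simp [Matrix.mulVec, dotProduct, Pi.sub_apply]
    rw [e1, e2]; ring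
  rw [hval] at hsum
  exact hsum

lemma inner_u_hasDerivAt {d₁ d₂ : ℕ} (K : (Fin d₂ → ℝ) → Matrix (Fin d₁) (Fin d₁) ℝ)
    (xT : ℝ → (Fin d₁ → ℝ) → (Fin d₂ → ℝ) → Fin d₁ → ℝ)
    (uT : ℝ → (Fin d₁ → ℝ) → (Fin d₂ → ℝ) → Fin d₂ → ℝ)
    (ξT : ℝ → (Fin d₁ → ℝ) → (Fin d₂ → ℝ) → Fin d₁ → ℝ)
    (t : ℝ) (x : Fin d₁ → ℝ) (u : Fin d₂ → ℝ) (ξ' : Fin d₁ → ℝ) (μ' : Fin d₂ → ℝ)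
    (l : Fin d₂) :
    HasDerivAt (fun sl => phaseFn K xT uT ξT t x (update u l sl) ξ' μ')
      ((μ' l : ℝ) : ℂ) (u l) := by
  unfold phaseFn
  have h := (dot_update_hasDerivAt u (uT t ξ' μ') μ' l).ofReal_comp
  exact (h.const_add _).add_const _

lemma inner_x_hasDerivAt {d₁ d₂ : ℕ} (K : (Fin d₂ → ℝ) → Matrix (Fin d₁) (Fin d₁) ℝ)
    (xT : ℝ → (Fin d₁ → ℝ) → (Fin d₂ → ℝ) → Fin d₁ → ℝ)
    (uT : ℝ → (Fin d₁ → ℝ) → (Fin d₂ → ℝ) → Fin d₂ → ℝ)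
    (ξT : ℝ → (Fin d₁ → ℝ) → (Fin d₂ → ℝ) → Fin d₁ → ℝ)
    (t : ℝ) (x : Fin d₁ → ℝ) (u : Fin d₂ → ℝ) (ξ' : Fin d₁ → ℝ) (μ' : Fin d₂ → ℝ)
    (hsym : ∀ i j, K μ' i j = K μ' j i) (a : Fin d₁) :
    HasDerivAt (fun sa => phaseFn K xT uT ξT t (update x a sa) u ξ' μ')
      (((ξT t ξ' μ' a : ℝ) : ℂ)
        + (Complex.I / 4) * ((2 * (K μ').mulVec (x - xT t ξ' μ') a : ℝ) : ℂ)) (x a) := by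
  unfold phaseFn
  have h1 := (dot_update_hasDerivAt x (xT t ξ' μ') (ξT t ξ' μ') a).ofReal_comp
  have h2 := ((quad_update_hasDerivAt (K μ') hsym x (xT t ξ' μ') a).ofReal_comp).const_mul
    (Complex.I / 4)
  exact (h1.add_const _).add h2

/-- On a 2-step Carnot group, consider the complex phase
`φ(t,x,u,ξ,μ) = (x - xᵗ)·ξᵗ + (u - uᵗ)·μ + (i/4)⟨|J_μ|(x-xᵗ), x-xᵗ⟩`, where
`(xᵗ, uᵗ, ξᵗ, μ)` is the Hamiltonian flow of `ℋ = |ξ + J_μ x/2|` starting at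
`(0, 0, ξ, μ)` (hypothesised below via Hamilton's equations, the initial conditions, and
differentiability in `ξ`), and `K μ = |J_μ|` is the positive semidefinite square root of
`-(J μ)²`.  Then the mixed Hessian `Φ = ∂_{(ξ,μ)} ∇_{(x,u)} φ` is block upper-triangular
of the form `[[Φ₀, *], [0, I]]` with `Φ₀ = ∂_ξ ξᵗ - (i/2)|J_μ| ∂_ξ xᵗ` independent of
`(x, u)`, and hence `det Φ = det Φ₀`. -/
theorem statement12 {d₁ d₂ : ℕ}
    (J : (Fin d₂ → ℝ) →ₗ[ℝ] Matrix (Fin d₁) (Fin d₁) ℝ)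
    (hskew : ∀ μ, (J μ)ᵀ = -(J μ))
    (K : (Fin d₂ → ℝ) → Matrix (Fin d₁) (Fin d₁) ℝ)
    (hK : ∀ μ, (K μ).PosSemidef ∧ K μ * K μ = -(J μ * J μ))
    (xT : ℝ → (Fin d₁ → ℝ) → (Fin d₂ → ℝ) → Fin d₁ → ℝ)
    (uT : ℝ → (Fin d₁ → ℝ) → (Fin d₂ → ℝ) → Fin d₂ → ℝ)
    (ξT : ℝ → (Fin d₁ → ℝ) → (Fin d₂ → ℝ) → Fin d₁ → ℝ)
    (hInit : ∀ (ξ : Fin d₁ → ℝ) (μ : Fin d₂ → ℝ), ξ ≠ 0 →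
      xT 0 ξ μ = 0 ∧ uT 0 ξ μ = 0 ∧ ξT 0 ξ μ = ξ)
    (hHamx : ∀ (ξ : Fin d₁ → ℝ) (μ : Fin d₂ → ℝ), ξ ≠ 0 → ∀ (t : ℝ) (i : Fin d₁),
      HasDerivAt (fun s => xT s ξ μ i)
        (deriv (fun a => sqrtHam J (xT t ξ μ) (uT t ξ μ) (update (ξT t ξ μ) i a) μ)
          (ξT t ξ μ i)) t)
    (hHamu : ∀ (ξ : Fin d₁ → ℝ) (μ : Fin d₂ → ℝ), ξ ≠ 0 → ∀ (t : ℝ) (j : Fin d₂),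
      HasDerivAt (fun s => uT s ξ μ j)
        (deriv (fun a => sqrtHam J (xT t ξ μ) (uT t ξ μ) (ξT t ξ μ) (update μ j a))
          (μ j)) t)
    (hHamξ : ∀ (ξ : Fin d₁ → ℝ) (μ : Fin d₂ → ℝ), ξ ≠ 0 → ∀ (t : ℝ) (i : Fin d₁),
      HasDerivAt (fun s => ξT s ξ μ i)
        (-(deriv (fun a => sqrtHam J (update (xT t ξ μ) i a) (uT t ξ μ) (ξT t ξ μ) μ)
          (xT t ξ μ i))) t)
    (hdiff : ∀ (t : ℝ) (μ : Fin d₂ → ℝ) (ξ : Fin d₁ → ℝ), ξ ≠ 0 →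
      DifferentiableAt ℝ (fun ξ' => xT t ξ' μ) ξ ∧
      DifferentiableAt ℝ (fun ξ' => ξT t ξ' μ) ξ) :
    ∀ (t : ℝ) (x : Fin d₁ → ℝ) (u : Fin d₂ → ℝ) (ξ : Fin d₁ → ℝ) (μ : Fin d₂ → ℝ),
      ξ ≠ 0 →
      -- the bottom-left block `∂_ξ ∇_u φ` vanishes:
      (∀ (l : Fin d₂) (b : Fin d₁),
        deriv (fun sb => deriv
          (fun sl => phaseFn K xT uT ξT t x (update u l sl) (update ξ b sb) μ) (u l))
          (ξ b) = 0) ∧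
      -- the bottom-right block `∂_μ ∇_u φ` is the identity:
      (∀ l j : Fin d₂,
        deriv (fun sj => deriv
          (fun sl => phaseFn K xT uT ξT t x (update u l sl) ξ (update μ j sj)) (u l))
          (μ j) = if l = j then 1 else 0) ∧
      -- the top-left block `∂_ξ ∇_x φ` equals `Φ₀ = ∂_ξ ξᵗ - (i/2) |J_μ| ∂_ξ xᵗ`,
      -- which is independent of `(x, u)`:
      (∀ (a b : Fin d₁),
        deriv (fun sb => deriv
          (fun sa => phaseFn K xT uT ξT t (update x a sa) u (update ξ b sb) μ) (x a))
          (ξ b)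
        = ((deriv (fun sb => ξT t (update ξ b sb) μ a) (ξ b) : ℝ) : ℂ)
          - (Complex.I / 2) * ∑ c : Fin d₁,
              ((K μ a c : ℝ) : ℂ) *
                ((deriv (fun sb => xT t (update ξ b sb) μ c) (ξ b) : ℝ) : ℂ)) ∧
      -- consequently `det Φ = det Φ₀`:
      (Matrix.fromBlocks
          (Matrix.of fun (a : Fin d₁) (b : Fin d₁) =>
            deriv (fun sb => deriv
              (fun sa => phaseFn K xT uT ξT t (update x a sa) u (update ξ b sb) μ) (x a))
              (ξ b))
          (Matrix.of fun (a : Fin d₁) (j : Fin d₂) =>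
            deriv (fun sj => deriv
              (fun sa => phaseFn K xT uT ξT t (update x a sa) u ξ (update μ j sj)) (x a))
              (μ j))
          (Matrix.of fun (l : Fin d₂) (b : Fin d₁) =>
            deriv (fun sb => deriv
              (fun sl => phaseFn K xT uT ξT t x (update u l sl) (update ξ b sb) μ) (u l))
              (ξ b))
          (Matrix.of fun (l : Fin d₂) (j : Fin d₂) =>
            deriv (fun sj => deriv
              (fun sl => phaseFn K xT uT ξT t x (update u l sl) ξ (update μ j sj)) (u l))
              (μ j))).det
        = (Matrix.of fun (a b : Fin d₁) =>
            ((deriv (fun sb => ξT t (update ξ b sb) μ a) (ξ b) : ℝ) : ℂ)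
              - (Complex.I / 2) * ∑ c : Fin d₁,
                  ((K μ a c : ℝ) : ℂ) *
                    ((deriv (fun sb => xT t (update ξ b sb) μ c) (ξ b) : ℝ) : ℂ)).det := by
  intro t x u ξ μ hξ
  have hsym : ∀ i j : Fin d₁, K μ i j = K μ j i := by
    intro i j
    have h := (hK μ).1.1
    have := congrFun (congrFun h j) i
    simpa [Matrix.conjTranspose_apply] using this
  have part1 : ∀ (l : Fin d₂) (b : Fin d₁),
      deriv (fun sb => deriv
        (fun sl => phaseFn K xT uT ξT t x (update u l sl) (update ξ b sb) μ) (u l))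
        (ξ b) = 0 := by
    intro l b
    have hfn : (fun sb => deriv
        (fun sl => phaseFn K xT uT ξT t x (update u l sl) (update ξ b sb) μ) (u l))
        = fun _ => ((μ l : ℝ) : ℂ) :=
      funext fun sb => (inner_u_hasDerivAt K xT uT ξT t x u (update ξ b sb) μ l).deriv
    rw [hfn, deriv_const]
  have part2 : ∀ l j : Fin d₂,
      deriv (fun sj => deriv
        (fun sl => phaseFn K xT uT ξT t x (update u l sl) ξ (update μ j sj)) (u l))
        (μ j) = if l = j then 1 else 0 := by
    intro l j
    have hfn : (fun sj => deriv
        (fun sl => phaseFn K xT uT ξT t x (update u l sl) ξ (update μ j sj)) (u l))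
        = fun sj => ((update μ j sj l : ℝ) : ℂ) :=
      funext fun sj => (inner_u_hasDerivAt K xT uT ξT t x u ξ (update μ j sj) l).deriv
    rw [hfn]
    rcases eq_or_ne l j with rfl | hlj
    · simp only [update_self, if_pos rfl]
      have hd : HasDerivAt (fun sj : ℝ => ((sj : ℝ) : ℂ)) (((1 : ℝ) : ℂ)) (μ l) :=
        (hasDerivAt_id (μ l)).ofReal_comp
      simpa using hd.deriv
    · simp only [update_of_ne hlj, if_neg hlj]
      exact deriv_const _ _
  have part3 : ∀ (a b : Fin d₁),
      deriv (fun sb => deriv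
        (fun sa => phaseFn K xT uT ξT t (update x a sa) u (update ξ b sb) μ) (x a))
        (ξ b)
      = ((deriv (fun sb => ξT t (update ξ b sb) μ a) (ξ b) : ℝ) : ℂ)
        - (Complex.I / 2) * ∑ c : Fin d₁,
            ((K μ a c : ℝ) : ℂ) *
              ((deriv (fun sb => xT t (update ξ b sb) μ c) (ξ b) : ℝ) : ℂ) := by
    intro a b
    have hfn : (fun sb => deriv
        (fun sa => phaseFn K xT uT ξT t (update x a sa) u (update ξ b sb) μ) (x a))
        = fun sb => ((ξT t (update ξ b sb) μ a : ℝ) : ℂ)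
            + (Complex.I / 4)
              * ((2 * (K μ).mulVec (x - xT t (update ξ b sb) μ) a : ℝ) : ℂ) :=
      funext fun sb =>
        (inner_x_hasDerivAt K xT uT ξT t x u (update ξ b sb) μ hsym a).deriv
    rw [hfn]
    have hLd : DifferentiableAt ℝ (fun sb => update ξ b sb) (ξ b) := by
      rw [differentiableAt_pi]
      intro i
      rcases eq_or_ne i b with rfl | hi
      · simp only [update_self]; exact differentiableAt_fun_id
      · simp only [update_of_ne hi]; exact differentiableAt_const _
    have hxd : ∀ c, DifferentiableAt ℝ (fun sb => xT t (update ξ b sb) μ c) (ξ b) := by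
      intro c
      have h1 : DifferentiableAt ℝ (fun ξ' => xT t ξ' μ) (update ξ b (ξ b)) := by
        rw [Function.update_eq_self]; exact (hdiff t μ ξ hξ).1
      exact (differentiableAt_pi.mp (h1.comp (ξ b) hLd)) c
    have hξd : DifferentiableAt ℝ (fun sb => ξT t (update ξ b sb) μ a) (ξ b) := by
      have h1 : DifferentiableAt ℝ (fun ξ' => ξT t ξ' μ) (update ξ b (ξ b)) := by
        rw [Function.update_eq_self]; exact (hdiff t μ ξ hξ).2
      exact (differentiableAt_pi.mp (h1.comp (ξ b) hLd)) a
    have hA : HasDerivAt (fun sb => ξT t (update ξ b sb) μ a)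
        (deriv (fun sb => ξT t (update ξ b sb) μ a) (ξ b)) (ξ b) := hξd.hasDerivAt
    have hB : HasDerivAt (fun sb => 2 * ((K μ).mulVec (x - xT t (update ξ b sb) μ) a))
        (2 * ∑ c, K μ a c * (-(deriv (fun sb => xT t (update ξ b sb) μ c) (ξ b))))
        (ξ b) := by
      have hsum := HasDerivAt.fun_sum (u := Finset.univ)
        (A := fun c sb => K μ a c * (x c - xT t (update ξ b sb) μ c))
        (A' := fun c => K μ a c * (-(deriv (fun sb => xT t (update ξ b sb) μ c) (ξ b))))
        (x := ξ b)
        (fun c _ => (((hxd c).hasDerivAt).const_sub (x c)).const_mul (K μ a c))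
      exact hsum.const_mul 2
    have hD := hA.ofReal_comp.fun_add ((hB.ofReal_comp).const_mul (Complex.I / 4))
    rw [hD.deriv]
    push_cast [Complex.ofReal_sum]
    simp only [neg_mul, Finset.sum_neg_distrib, mul_neg]
    ring
  refine ⟨part1, part2, part3, ?_⟩
  have hC : (Matrix.of fun (l : Fin d₂) (b : Fin d₁) =>
      deriv (fun sb => deriv
        (fun sl => phaseFn K xT uT ξT t x (update u l sl) (update ξ b sb) μ) (u l))
        (ξ b)) = (0 : Matrix (Fin d₂) (Fin d₁) ℂ) := by
    ext l b
    simpa using part1 l b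
  have hDm : (Matrix.of fun (l : Fin d₂) (j : Fin d₂) =>
      deriv (fun sj => deriv
        (fun sl => phaseFn K xT uT ξT t x (update u l sl) ξ (update μ j sj)) (u l))
        (μ j)) = (1 : Matrix (Fin d₂) (Fin d₂) ℂ) := by
    ext l j
    simp [part2 l j, Matrix.one_apply]
  have hAm : (Matrix.of fun (a : Fin d₁) (b : Fin d₁) =>
      deriv (fun sb => deriv
        (fun sa => phaseFn K xT uT ξT t (update x a sa) u (update ξ b sb) μ) (x a))
        (ξ b))
      = (Matrix.of fun (a b : Fin d₁) =>
          ((deriv (fun sb => ξT t (update ξ b sb) μ a) (ξ b) : ℝ) : ℂ)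
            - (Complex.I / 2) * ∑ c : Fin d₁,
                ((K μ a c : ℝ) : ℂ) *
                  ((deriv (fun sb => xT t (update ξ b sb) μ c) (ξ b) : ℝ) : ℂ)) := by
    ext a b
    simpa using part3 a b
  rw [hC, hDm, hAm, Matrix.det_fromBlocks_zero₂₁, Matrix.det_one, mul_one]
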